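/- Let A = (a_{ij}) be a real n×n matrix with nonnegative entries. Then A has a real eigenvalue r ≥ 0 such that every eigenvalue λ of A satisfies |λ| ≤ r, and r satisfies min_i Σ_j a_{ij} ≤ r ≤ max_i Σ_j a_{ij}. -/

import Mathlib

open Matrix Filter Topology

namespace PerronAux

variable {n : ℕ}

lemma mulVec_apply' (B : Matrix (Fin n) (Fin n) ℝ) (y : Fin n → ℝ) (i : Fin n) :
    B.mulVec y i = ∑ j, B i j * y j := rfl

lemma exists_pos_of_simplex (hn : 0 < n) {y : Fin n → ℝ}
    (hy : y ∈ stdSimplex ℝ (Fin n)) : ∃ j, 0 < y j := by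
  by_contra h
  push_neg at h
  have : ∑ j, y j = 0 := Finset.sum_eq_zero fun j _ => le_antisymm (h j) (hy.1 j)
  rw [hy.2] at this
  norm_num at this

lemma bddAbove_rows (B : Matrix (Fin n) (Fin n) ℝ) :
    BddAbove (Set.range fun i => ∑ j, B i j) :=
  (Set.finite_range _).bddAbove

/-- Collatz–Wielandt upper bound: any "sub-eigenvalue" is at most the max row sum. -/
lemma rowbound (hn : 0 < n) (B : Matrix (Fin n) (Fin n) ℝ)
    (hB : ∀ i j, 0 ≤ B i j) {t : ℝ} {y : Fin n → ℝ} (hy : y ∈ stdSimplex ℝ (Fin n))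
    (h : ∀ i, t * y i ≤ B.mulVec y i) : t ≤ ⨆ i, ∑ j, B i j := by
  haveI : Nonempty (Fin n) := ⟨⟨0, hn⟩⟩
  obtain ⟨i, hi⟩ := Finite.exists_max y
  obtain ⟨j0, hj0⟩ := exists_pos_of_simplex hn hy
  have hyi : 0 < y i := lt_of_lt_of_le hj0 (hi j0)
  have h1 : t * y i ≤ (∑ j, B i j) * y i := by
    calc t * y i ≤ B.mulVec y i := h i
    _ = ∑ j, B i j * y j := rfl
    _ ≤ ∑ j, B i j * y i :=
        Finset.sum_le_sum fun j _ => mul_le_mul_of_nonneg_left (hi j) (hB i j)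
    _ = (∑ j, B i j) * y i := by rw [Finset.sum_mul]
  have h2 : t ≤ ∑ j, B i j := le_of_mul_le_mul_right (by linarith [h1]) hyi
  exact h2.trans (le_ciSup (bddAbove_rows B) i)

/-- The uniform vector lies in the standard simplex. -/
lemma uniform_mem (hn : 0 < n) : (fun _ : Fin n => (n : ℝ)⁻¹) ∈ stdSimplex ℝ (Fin n) := by
  have hnpos : (0:ℝ) < n := by exact_mod_cast hn
  refine ⟨fun _ => by positivity, ?_⟩
  simp [Finset.sum_const, Finset.card_univ]
  field_simp

/-- Perron–Frobenius for matrices with strictly positive entries, via maximizing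
the Collatz–Wielandt feasible set. -/
lemma pf_pos (hn : 0 < n) (B : Matrix (Fin n) (Fin n) ℝ)
    (hB : ∀ i j, 0 < B i j) :
    ∃ r : ℝ, ∃ x : Fin n → ℝ, 0 ≤ r ∧ x ∈ stdSimplex ℝ (Fin n) ∧
      B.mulVec x = r • x ∧
      ∀ t (y : Fin n → ℝ), y ∈ stdSimplex ℝ (Fin n) →
        (∀ i, t * y i ≤ B.mulVec y i) → t ≤ r := by
  haveI : Nonempty (Fin n) := ⟨⟨0, hn⟩⟩
  set M : ℝ := ⨆ i, ∑ j, B i j with hM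
  have hM0 : 0 ≤ M := by
    refine le_trans ?_ (le_ciSup (bddAbove_rows B) (⟨0, hn⟩ : Fin n))
    exact Finset.sum_nonneg fun j _ => (hB _ j).le
  set K : Set (ℝ × (Fin n → ℝ)) :=
    {p | p.1 ∈ Set.Icc (0:ℝ) M ∧ p.2 ∈ stdSimplex ℝ (Fin n) ∧
      ∀ i, p.1 * p.2 i ≤ B.mulVec p.2 i} with hKdef
  have hKclosed : IsClosed K := by
    have h1 : IsClosed {p : ℝ × (Fin n → ℝ) | p.1 ∈ Set.Icc (0:ℝ) M} :=
      isClosed_Icc.preimage continuous_fst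
    have h2 : IsClosed {p : ℝ × (Fin n → ℝ) | p.2 ∈ stdSimplex ℝ (Fin n)} :=
      (isCompact_stdSimplex ℝ (Fin n)).isClosed.preimage continuous_snd
    have h3 : IsClosed {p : ℝ × (Fin n → ℝ) | ∀ i, p.1 * p.2 i ≤ B.mulVec p.2 i} := by
      have : {p : ℝ × (Fin n → ℝ) | ∀ i, p.1 * p.2 i ≤ B.mulVec p.2 i} =
          ⋂ i, {p : ℝ × (Fin n → ℝ) | p.1 * p.2 i ≤ ∑ j, B i j * p.2 j} := by
        ext p; simp [mulVec_apply']
      rw [this]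
      refine isClosed_iInter fun i => isClosed_le ?_ ?_
      · exact continuous_fst.mul ((continuous_apply i).comp continuous_snd)
      · exact continuous_finset_sum _ fun j _ =>
          continuous_const.mul ((continuous_apply j).comp continuous_snd)
    have : K = _ ∩ (_ ∩ _) := rfl
    exact h1.inter (h2.inter h3)
  have hKcompact : IsCompact K := by
    refine IsCompact.of_isClosed_subset
      ((isCompact_Icc (a := (0:ℝ)) (b := M)).prod (isCompact_stdSimplex ℝ (Fin n)))
      hKclosed ?_
    rintro ⟨t, y⟩ ⟨h1, h2, _⟩
    exact ⟨h1, h2⟩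
  have hKne : K.Nonempty := by
    refine ⟨(0, fun _ => (n:ℝ)⁻¹), ⟨le_refl _, hM0⟩, uniform_mem hn, fun i => ?_⟩
    simp only [zero_mul, mulVec_apply']
    exact Finset.sum_nonneg fun j _ => mul_nonneg (hB i j).le (by positivity)
  obtain ⟨⟨r, x⟩, hpK, hmax⟩ := hKcompact.exists_isMaxOn hKne
    (continuous_fst.continuousOn (f := fun p : ℝ × (Fin n → ℝ) => p.1))
  rw [isMaxOn_iff] at hmax
  obtain ⟨⟨hr0, hrM⟩, hxs, hfeas⟩ := hpK
  have hsup : ∀ t (y : Fin n → ℝ), y ∈ stdSimplex ℝ (Fin n) →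
      (∀ i, t * y i ≤ B.mulVec y i) → t ≤ r := by
    intro t y hy hty
    rcases le_or_gt t 0 with ht | ht
    · exact ht.trans hr0
    · have htM : t ≤ M := rowbound hn B (fun i j => (hB i j).le) hy hty
      exact hmax (t, y) ⟨⟨ht.le, htM⟩, hy, hty⟩
  refine ⟨r, x, hr0, hxs, ?_, hsup⟩
  -- show the eigenvalue equation
  by_contra hne
  set z : Fin n → ℝ := fun i => B.mulVec x i - r * x i with hz
  have hz0 : ∀ i, 0 ≤ z i := fun i => sub_nonneg.mpr (hfeas i)
  have hzne : ∃ i0, 0 < z i0 := by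
    by_contra h
    push_neg at h
    apply hne
    funext i
    have : z i = 0 := le_antisymm (h i) (hz0 i)
    have := sub_eq_zero.mp this
    simpa [Pi.smul_apply, smul_eq_mul] using this
  obtain ⟨i0, hi0⟩ := hzne
  obtain ⟨j0, hj0⟩ := exists_pos_of_simplex hn hxs
  set w : Fin n → ℝ := B.mulVec x with hw
  have hwpos : ∀ i, 0 < w i := by
    intro i
    refine Finset.sum_pos' (fun j _ => mul_nonneg (hB i j).le (hxs.1 j)) ⟨j0, Finset.mem_univ _, ?_⟩
    exact mul_pos (hB i j0) hj0
  have hBzpos : ∀ i, 0 < B.mulVec z i := by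
    intro i
    refine Finset.sum_pos' (fun j _ => mul_nonneg (hB i j).le (hz0 j)) ⟨i0, Finset.mem_univ _, ?_⟩
    exact mul_pos (hB i i0) hi0
  -- B w = r • w + B z
  have hBw : ∀ i, B.mulVec w i = r * w i + B.mulVec z i := by
    intro i
    have hxw : w = (fun i => r * x i + z i) := by
      funext i
      have hzi : z i = w i - r * x i := rfl
      rw [hzi]; ring
    calc B.mulVec w i = ∑ j, B i j * (r * x j + z j) := by rw [hxw]; rfl
    _ = r * (∑ j, B i j * x j) + ∑ j, B i j * z j := by
        rw [Finset.mul_sum, ← Finset.sum_add_distrib]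
        congr 1; funext j; ring
    _ = r * w i + B.mulVec z i := rfl
  set ε : ℝ := Finset.univ.inf' (Finset.univ_nonempty) (fun i => B.mulVec z i / w i) with hε
  have hεpos : 0 < ε := by
    exact (Finset.lt_inf'_iff _).mpr fun i _ => div_pos (hBzpos i) (hwpos i)
  have hkey : ∀ i, (r + ε) * w i ≤ B.mulVec w i := by
    intro i
    have h1 : ε ≤ B.mulVec z i / w i := Finset.inf'_le _ (Finset.mem_univ i)
    have h2 : ε * w i ≤ B.mulVec z i := (le_div_iff₀ (hwpos i)).mp h1
    calc (r + ε) * w i = r * w i + ε * w i := by ring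
    _ ≤ r * w i + B.mulVec z i := by linarith
    _ = B.mulVec w i := (hBw i).symm
  -- normalize w
  set S : ℝ := ∑ i, w i with hS
  have hSpos : 0 < S := Finset.sum_pos (fun i _ => hwpos i) Finset.univ_nonempty
  set y : Fin n → ℝ := fun i => S⁻¹ * w i with hy
  have hys : y ∈ stdSimplex ℝ (Fin n) := by
    constructor
    · exact fun i => mul_nonneg (inv_nonneg.mpr hSpos.le) (hwpos i).le
    · rw [← Finset.mul_sum]
      field_simp
      exact hS.symm
  have hyfeas : ∀ i, (r + ε) * y i ≤ B.mulVec y i := by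
    intro i
    have : B.mulVec y i = S⁻¹ * B.mulVec w i := by
      simp only [mulVec_apply', hy, Finset.mul_sum]
      exact Finset.sum_congr rfl fun j _ => by ring
    rw [this, hy]
    calc (r + ε) * (S⁻¹ * w i) = S⁻¹ * ((r + ε) * w i) := by ring
    _ ≤ S⁻¹ * B.mulVec w i :=
        mul_le_mul_of_nonneg_left (hkey i) (inv_nonneg.mpr hSpos.le)
  have := hsup (r + ε) y hys hyfeas
  linarith

/-- Membership in the spectrum of a complex matrix is equivalent to having an eigenvector. -/
lemma spectrum_iff (M : Matrix (Fin n) (Fin n) ℂ) (μ : ℂ) :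
    μ ∈ spectrum ℂ M ↔ ∃ v : Fin n → ℂ, v ≠ 0 ∧ M.mulVec v = μ • v := by
  have h1 : spectrum ℂ M = spectrum ℂ (Matrix.toLinAlgEquiv' M) :=
    (AlgEquiv.spectrum_eq Matrix.toLinAlgEquiv' M).symm
  rw [h1, ← Module.End.hasEigenvalue_iff_mem_spectrum]
  constructor
  · intro h
    obtain ⟨v, hv⟩ := h.exists_hasEigenvector
    refine ⟨v, hv.2, ?_⟩
    have h2 := Module.End.mem_eigenspace_iff.mp hv.1
    rw [Matrix.toLinAlgEquiv'_apply] at h2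
    exact h2
  · rintro ⟨v, hv0, hv⟩
    refine Module.End.hasEigenvalue_of_hasEigenvector
      (x := v) ⟨Module.End.mem_eigenspace_iff.mpr ?_, hv0⟩
    rw [Matrix.toLinAlgEquiv'_apply]
    exact hv

lemma mulVec_map_coe (A : Matrix (Fin n) (Fin n) ℝ) (x : Fin n → ℝ) (i : Fin n) :
    (A.map (fun a => (a:ℂ))).mulVec (fun j => (x j : ℂ)) i = ((A.mulVec x i : ℝ) : ℂ) := by
  simp only [Matrix.mulVec, dotProduct, Matrix.map_apply]
  push_cast
  rfl

end PerronAux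

open PerronAux

/-- Perron–Frobenius theorem: a nonnegative real `n×n` matrix has a nonnegative real
eigenvalue `r` dominating all (complex) eigenvalues in modulus, and `r` lies between the
minimum and maximum row sums. -/
theorem perron_frobenius {n : ℕ} (hn : 0 < n) (A : Matrix (Fin n) (Fin n) ℝ)
    (hA : ∀ i j, 0 ≤ A i j) :
    ∃ r : ℝ, 0 ≤ r ∧
      (r : ℂ) ∈ spectrum ℂ (A.map (fun a => (a : ℂ))) ∧
      (∀ μ ∈ spectrum ℂ (A.map (fun a => (a : ℂ))), ‖μ‖ ≤ r) ∧
      (⨅ i, ∑ j, A i j) ≤ r ∧ r ≤ ⨆ i, ∑ j, A i j := by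
  haveI : Nonempty (Fin n) := ⟨⟨0, hn⟩⟩
  -- perturbed matrices with strictly positive entries
  set B : ℕ → Matrix (Fin n) (Fin n) ℝ :=
    fun k => Matrix.of fun i j => A i j + 1/((k:ℝ)+1) with hBdef
  have hBpos : ∀ k i j, 0 < B k i j := by
    intro k i j
    have : (0:ℝ) < 1/((k:ℝ)+1) := by positivity
    simp only [hBdef, Matrix.of_apply]
    linarith [hA i j]
  have hBge : ∀ k i j, A i j ≤ B k i j := by
    intro k i j
    have : (0:ℝ) ≤ 1/((k:ℝ)+1) := by positivity
    simp only [hBdef, Matrix.of_apply]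
    linarith
  choose r x hr0 hxs hEig hSup using fun k => pf_pos hn (B k) (hBpos k)
  -- dominance of B k over A in mulVec on nonneg vectors
  have hmulVec_le : ∀ k (y : Fin n → ℝ), (∀ i, 0 ≤ y i) →
      ∀ i, A.mulVec y i ≤ (B k).mulVec y i := by
    intro k y hy i
    simp only [mulVec_apply']
    refine Finset.sum_le_sum fun j _ => mul_le_mul_of_nonneg_right (hBge k i j) (hy j)
  -- any sub-eigenvalue of A is ≤ r k
  have hsubA : ∀ (t : ℝ) (y : Fin n → ℝ), y ∈ stdSimplex ℝ (Fin n) →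
      (∀ i, t * y i ≤ A.mulVec y i) → ∀ k, t ≤ r k := by
    intro t y hy ht k
    exact hSup k t y hy fun i => (ht i).trans (hmulVec_le k y hy.1 i)
  -- upper bound on r k
  have hMx0 : ∀ i, (0:ℝ) ≤ ∑ j, A i j := fun i => Finset.sum_nonneg fun j _ => hA i j
  set Mx : ℝ := ⨆ i, ∑ j, A i j with hMx
  have hrub : ∀ k, r k ≤ Mx + n := by
    intro k
    have h1 : r k ≤ ⨆ i, ∑ j, B k i j := by
      refine rowbound hn (B k) (fun i j => (hBpos k i j).le) (hxs k) fun i => ?_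
      rw [hEig k]
      simp [Pi.smul_apply, smul_eq_mul]
    refine h1.trans (ciSup_le fun i => ?_)
    have h2 : ∑ j, B k i j = (∑ j, A i j) + n * (1/((k:ℝ)+1)) := by
      simp only [hBdef, Matrix.of_apply, Finset.sum_add_distrib, Finset.sum_const,
        Finset.card_univ, Fintype.card_fin, nsmul_eq_mul]
    have h3 : ∑ j, A i j ≤ Mx := le_ciSup (bddAbove_rows A) i
    have h4 : n * (1/((k:ℝ)+1)) ≤ n := by
      have hn1 : (0:ℝ) ≤ (n:ℝ) := Nat.cast_nonneg n
      have : 1/((k:ℝ)+1) ≤ 1 := by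
        rw [div_le_one (by positivity)]
        linarith [Nat.cast_nonneg (α := ℝ) k]
      nlinarith
    linarith
  -- compactness argument: extract convergent subsequence of (r k, x k)
  have hK : IsCompact (Set.Icc (0:ℝ) (Mx + n) ×ˢ stdSimplex ℝ (Fin n)) :=
    (isCompact_Icc).prod (isCompact_stdSimplex ℝ (Fin n))
  obtain ⟨⟨rL, xL⟩, hmem, φ, hφ, hconv⟩ :=
    hK.tendsto_subseq (x := fun k => (r k, x k)) (fun k => ⟨⟨hr0 k, hrub k⟩, hxs k⟩)
  rw [Set.mem_prod] at hmem
  have hrt : Tendsto (fun k => r (φ k)) atTop (𝓝 rL) :=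
    (continuous_fst.tendsto _).comp hconv
  have hxt : ∀ j, Tendsto (fun k => x (φ k) j) atTop (𝓝 (xL j)) := by
    intro j
    exact (((continuous_apply j).comp continuous_snd).tendsto _).comp hconv
  have hct : Tendsto (fun k => 1/((φ k : ℝ)+1)) atTop (𝓝 0) :=
    tendsto_one_div_add_atTop_nhds_zero_nat.comp hφ.tendsto_atTop
  -- eigenvalue equation in the limit
  have hEigL : A.mulVec xL = rL • xL := by
    funext i
    have hL : Tendsto (fun k => (B (φ k)).mulVec (x (φ k)) i) atTop (𝓝 (A.mulVec xL i)) := by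
      have : ∀ k, (B (φ k)).mulVec (x (φ k)) i =
          ∑ j, (A i j + 1/((φ k : ℝ)+1)) * x (φ k) j := by
        intro k; rfl
      simp only [this, mulVec_apply']
      refine tendsto_finset_sum _ fun j _ => ?_
      have : Tendsto (fun k => A i j + 1/((φ k : ℝ)+1)) atTop (𝓝 (A i j)) := by
        simpa using (tendsto_const_nhds (x := A i j)).add hct
      simpa using this.mul (hxt j)
    have hR : Tendsto (fun k => r (φ k) * x (φ k) i) atTop (𝓝 (rL * xL i)) :=
      hrt.mul (hxt i)
    have heq : ∀ k, (B (φ k)).mulVec (x (φ k)) i = r (φ k) * x (φ k) i := by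
      intro k
      rw [hEig (φ k)]
      simp [Pi.smul_apply, smul_eq_mul]
    rw [funext heq] at hL
    have := tendsto_nhds_unique hL hR
    simpa [Pi.smul_apply, smul_eq_mul] using this
  have hxLs : xL ∈ stdSimplex ℝ (Fin n) := hmem.2
  have hrL0 : 0 ≤ rL := hmem.1.1
  have hxLne : xL ≠ 0 := by
    intro h
    have := hxLs.2
    rw [h] at this
    simp at this
  refine ⟨rL, hrL0, ?_, ?_, ?_, ?_⟩
  · -- rL is in the spectrum
    rw [spectrum_iff]
    refine ⟨fun j => (xL j : ℂ), ?_, ?_⟩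
    · intro h
      apply hxLne
      funext j
      have := congrFun h j
      simpa using this
    · funext i
      rw [mulVec_map_coe, hEigL]
      simp [Pi.smul_apply, smul_eq_mul]
  · -- dominance
    intro μ hμ
    rw [spectrum_iff] at hμ
    obtain ⟨v, hv0, hv⟩ := hμ
    set y : Fin n → ℝ := fun i => ‖v i‖ with hy
    have hy0 : ∀ i, 0 ≤ y i := fun i => norm_nonneg _
    obtain ⟨i1, hi1⟩ : ∃ i, v i ≠ 0 := by
      by_contra h
      push_neg at h
      exact hv0 (funext h)
    have hkey : ∀ i, ‖μ‖ * y i ≤ A.mulVec y i := by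
      intro i
      have h1 : ‖μ * v i‖ = ‖μ‖ * y i := by
        rw [norm_mul]
      have h2 : μ * v i = (A.map (fun a => (a:ℂ))).mulVec v i := by
        rw [hv]; simp [Pi.smul_apply, smul_eq_mul]
      have h3 : ‖(A.map (fun a => (a:ℂ))).mulVec v i‖ ≤ ∑ j, A i j * y j := by
        calc ‖∑ j, (A i j : ℂ) * v j‖ ≤ ∑ j, ‖(A i j : ℂ) * v j‖ :=
              norm_sum_le _ _
        _ = ∑ j, A i j * y j := by
              refine Finset.sum_congr rfl fun j _ => ?_
              rw [norm_mul, Complex.norm_of_nonneg (hA i j)]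
      rw [← h1, h2]
      exact h3
    -- normalize y
    set S : ℝ := ∑ i, y i with hS
    have hSpos : 0 < S :=
      Finset.sum_pos' (fun i _ => hy0 i)
        ⟨i1, Finset.mem_univ _, by simpa [hy] using norm_pos_iff.mpr hi1⟩
    set y' : Fin n → ℝ := fun i => S⁻¹ * y i with hy'
    have hy's : y' ∈ stdSimplex ℝ (Fin n) := by
      constructor
      · exact fun i => mul_nonneg (inv_nonneg.mpr hSpos.le) (hy0 i)
      · rw [← Finset.mul_sum]; field_simp; exact hS.symm
    have hy'feas : ∀ i, ‖μ‖ * y' i ≤ A.mulVec y' i := by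
      intro i
      have : A.mulVec y' i = S⁻¹ * A.mulVec y i := by
        simp only [mulVec_apply', hy', Finset.mul_sum]
        exact Finset.sum_congr rfl fun j _ => by ring
      rw [this]
      calc ‖μ‖ * (S⁻¹ * y i) = S⁻¹ * (‖μ‖ * y i) := by ring
      _ ≤ S⁻¹ * A.mulVec y i :=
          mul_le_mul_of_nonneg_left (hkey i) (inv_nonneg.mpr hSpos.le)
    have hle : ∀ k, ‖μ‖ ≤ r k := hsubA _ y' hy's hy'feas
    exact ge_of_tendsto' hrt fun k => hle (φ k)
  · -- min row sum lower bound
    have hufeas : ∀ i, (⨅ i, ∑ j, A i j) * ((n:ℝ)⁻¹) ≤ A.mulVec (fun _ => (n:ℝ)⁻¹) i := by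
      intro i
      have h1 : (⨅ i, ∑ j, A i j) ≤ ∑ j, A i j :=
        ciInf_le (Set.finite_range _).bddBelow i
      have h2 : A.mulVec (fun _ => (n:ℝ)⁻¹) i = (∑ j, A i j) * (n:ℝ)⁻¹ := by
        simp [mulVec_apply', Finset.sum_mul]
      rw [h2]
      exact mul_le_mul_of_nonneg_right h1 (by positivity)
    have hle : ∀ k, (⨅ i, ∑ j, A i j) ≤ r k :=
      hsubA _ (fun _ => (n:ℝ)⁻¹) (uniform_mem hn) hufeas
    exact ge_of_tendsto' hrt fun k => hle (φ k)
  · -- max row sum upper bound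
    refine rowbound hn A hA hxLs fun i => ?_
    rw [hEigL]
    simp [Pi.smul_apply, smul_eq_mul]
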